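/- arXiv:2210.05330 — 6 statements merged into one kernel-verified Lean document; each statement's English description precedes it below -/
import Mathlib

section
/- (Pointwise sandwich lemma underlying Theorem 1, Case I.) Assume the setup below. Fix x ∈ X and a label j ∈ Fin k, and suppose: v(x) = y'(x); E_C(x, j) ≤ α; and α ≤ −σ_j(x) + τ_{y'(x) y'(x)} · P_{w(x)}(x) + ∑_{l ≠ y'(x)} τ_{l y'(x)} · P_l(x). Then P_{w(x)}(x) ≤ P_{y'(x)}(x) ≤ P_{w(x)}(x) + ε / τ_{y'(x) y'(x)}. -/
open MeasureTheory Finset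

theorem confes_pointwise_caseI
    {X : Type*} {k : ℕ} (hk : 2 ≤ k)
    (P : X → Fin k → ℝ)
    (hP_nonneg : ∀ x l, 0 ≤ P x l) (hP_sum : ∀ x, ∑ l, P x l = 1)
    (τ : Fin k → Fin k → ℝ)
    (hτ_nonneg : ∀ l j, 0 ≤ τ l j) (hτ_sum : ∀ l, ∑ j, τ l j = 1)
    (hτ_diag : ∀ j, 0 < τ j j)
    (v w y' : X → Fin k)
    (hv : ∀ x l, P x l ≤ P x (v x))
    (hw_ne : ∀ x, w x ≠ v x)
    (hw : ∀ x l, l ≠ v x → P x l ≤ P x (w x))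
    (f : X → Fin k → ℝ)
    (hf_nonneg : ∀ x l, 0 ≤ f x l) (hf_sum : ∀ x, ∑ l, f x l = 1)
    (hy' : ∀ x l, f x l ≤ f x (y' x))
    (ε : ℝ) (hε : 0 < ε)
    (happrox : ∀ x l, |f x l - ∑ i, τ i l * P x i| ≤ ε)
    (α : ℝ) (x : X) (j : Fin k)
    (hvy : v x = y' x)
    (hEC : f x (y' x) - f x j ≤ α)
    (hα : α ≤ -f x j + τ (y' x) (y' x) * P x (w x)
        + ∑ l ∈ Finset.univ.erase (y' x), τ l (y' x) * P x l) :
    P x (w x) ≤ P x (y' x) ∧ P x (y' x) ≤ P x (w x) + ε / τ (y' x) (y' x) := by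
  have hd := hτ_diag (y' x)
  constructor
  · have := hv x (w x); rwa [hvy] at this
  · -- from hEC, hα: f x (y' x) ≤ τ_{y'y'} P_w + rest
    have h1 : f x (y' x) ≤ τ (y' x) (y' x) * P x (w x)
        + ∑ l ∈ Finset.univ.erase (y' x), τ l (y' x) * P x l := by linarith
    have h2 : ∑ i, τ i (y' x) * P x i = τ (y' x) (y' x) * P x (y' x)
        + ∑ l ∈ Finset.univ.erase (y' x), τ l (y' x) * P x l := by
      rw [← Finset.add_sum_erase _ _ (Finset.mem_univ (y' x))]
    have h3 := happrox x (y' x)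
    rw [abs_le] at h3
    have h4 : τ (y' x) (y' x) * P x (y' x) ≤ τ (y' x) (y' x) * P x (w x) + ε := by
      linarith [h3.1]
    have h5 : ε / τ (y' x) (y' x) * τ (y' x) (y' x) = ε := div_mul_cancel₀ _ hd.ne'
    nlinarith [h4, hd, h5]
end

section
/- (Pointwise sandwich lemma underlying Theorem 1, Case II.) Assume the setup below. Fix x ∈ X and a label j ∈ Fin k, and suppose: j = v(x); y'(x) ≠ j; E_C(x, j) > α; and α ≥ σ_{y'(x)}(x) − τ_{jj} · P_{w(x)}(x) − ∑_{l ≠ j} τ_{lj} · P_l(x). Then P_{w(x)}(x) ≤ P_j(x) < P_{w(x)}(x) + ε / τ_{jj}. -/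
open MeasureTheory Finset

theorem confes_pointwise_caseII
    {X : Type*} {k : ℕ} (hk : 2 ≤ k)
    (P : X → Fin k → ℝ)
    (hP_nonneg : ∀ x l, 0 ≤ P x l) (hP_sum : ∀ x, ∑ l, P x l = 1)
    (τ : Fin k → Fin k → ℝ)
    (hτ_nonneg : ∀ l j, 0 ≤ τ l j) (hτ_sum : ∀ l, ∑ j, τ l j = 1)
    (hτ_diag : ∀ j, 0 < τ j j)
    (v w y' : X → Fin k)
    (hv : ∀ x l, P x l ≤ P x (v x))
    (hw_ne : ∀ x, w x ≠ v x)
    (hw : ∀ x l, l ≠ v x → P x l ≤ P x (w x))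
    (f : X → Fin k → ℝ)
    (hf_nonneg : ∀ x l, 0 ≤ f x l) (hf_sum : ∀ x, ∑ l, f x l = 1)
    (hy' : ∀ x l, f x l ≤ f x (y' x))
    (ε : ℝ) (hε : 0 < ε)
    (happrox : ∀ x l, |f x l - ∑ i, τ i l * P x i| ≤ ε)
    (α : ℝ) (x : X) (j : Fin k)
    (hjv : j = v x)
    (hy'j : y' x ≠ j)
    (hEC : α < f x (y' x) - f x j)
    (hα : f x (y' x) - τ j j * P x (w x)
        - ∑ l ∈ Finset.univ.erase j, τ l j * P x l ≤ α) :
    P x (w x) ≤ P x j ∧ P x j < P x (w x) + ε / τ j j := by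
  have hτ := hτ_diag j
  constructor
  · rw [hjv]; exact hv x (w x)
  · have hsum := Finset.add_sum_erase Finset.univ (fun i => τ i j * P x i) (Finset.mem_univ j)
    have h2 := abs_le.mp (happrox x j)
    have hlt := lt_of_le_of_lt hα hEC
    have key : τ j j * P x j - ε < τ j j * P x (w x) := by
      nlinarith [h2.1, h2.2]
    have : P x j - P x (w x) < ε / τ j j := by
      rw [lt_div_iff₀ hτ]; nlinarith
    linarith
end

section
/- (Pointwise sandwich lemma underlying Lemma 1.) Assume the setup below. Fix x ∈ X and a label j ∈ Fin k, and suppose: j = v(x); σ_j(x) < α; and α ≤ τ_{jj} · P_{w(x)}(x) + ∑_{l ≠ j} τ_{lj} · P_l(x). Then P_{w(x)}(x) ≤ P_j(x) < P_{w(x)}(x) + ε / τ_{jj}. -/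
open MeasureTheory Finset

theorem confes_pointwise_lemma1
    {X : Type*} {k : ℕ} (hk : 2 ≤ k)
    (P : X → Fin k → ℝ)
    (hP_nonneg : ∀ x l, 0 ≤ P x l) (hP_sum : ∀ x, ∑ l, P x l = 1)
    (τ : Fin k → Fin k → ℝ)
    (hτ_nonneg : ∀ l j, 0 ≤ τ l j) (hτ_sum : ∀ l, ∑ j, τ l j = 1)
    (hτ_diag : ∀ j, 0 < τ j j)
    (v w y' : X → Fin k)
    (hv : ∀ x l, P x l ≤ P x (v x))
    (hw_ne : ∀ x, w x ≠ v x)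
    (hw : ∀ x l, l ≠ v x → P x l ≤ P x (w x))
    (f : X → Fin k → ℝ)
    (hf_nonneg : ∀ x l, 0 ≤ f x l) (hf_sum : ∀ x, ∑ l, f x l = 1)
    (hy' : ∀ x l, f x l ≤ f x (y' x))
    (ε : ℝ) (hε : 0 < ε)
    (happrox : ∀ x l, |f x l - ∑ i, τ i l * P x i| ≤ ε)
    (α : ℝ) (x : X) (j : Fin k)
    (hjv : j = v x)
    (hconf : f x j < α)
    (hα : α ≤ τ j j * P x (w x) + ∑ l ∈ Finset.univ.erase j, τ l j * P x l) :
    P x (w x) ≤ P x j ∧ P x j < P x (w x) + ε / τ j j := by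
  constructor
  · rw [hjv]; exact hv x (w x)
  · have hsplit : ∑ i, τ i j * P x i
        = τ j j * P x j + ∑ l ∈ Finset.univ.erase j, τ l j * P x l := by
      rw [← Finset.add_sum_erase _ _ (Finset.mem_univ j)]
    have h1 := happrox x j
    rw [abs_le] at h1
    have h2 : ∑ i, τ i j * P x i - ε ≤ f x j := by linarith [h1.2]
    have h3 : τ j j * P x j < τ j j * P x (w x) + ε := by
      rw [hsplit] at h2; linarith
    have hτj := hτ_diag j
    have h4 : ε / τ j j * τ j j = ε := div_mul_cancel₀ _ hτj.ne'
    nlinarith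
end

section
/- (Intermediate measure bound for Case I, Equation (14).) Assume the setup below, and suppose the threshold α ∈ ℝ satisfies, for every x ∈ X and every label j ∈ Fin k, α ≤ −σ_j(x) + τ_{y'(x) y'(x)} · P_{w(x)}(x) + ∑_{l ≠ y'(x)} τ_{l y'(x)} · P_l(x). Then ν{(x, j) : j ≠ v(x) and E_C(x, j) ≤ α} ≤ μ_X{x : P_{w(x)}(x) ≤ P_{y'(x)}(x) ≤ P_{w(x)}(x) + ε / min_l τ_{ll}} + ν{(x, j) : j ≠ v(x) and v(x) ≠ y'(x)}. -/
open MeasureTheory Finset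

private lemma meas_comp' {X : Type*} [MeasurableSpace X] {k : ℕ} (P : X → Fin k → ℝ)
    (hP : ∀ l, Measurable fun x => P x l) (w : X → Fin k) (hw : Measurable w) :
    Measurable fun x => P x (w x) := by
  have h : (fun x => P x (w x)) = fun x => ∑ l, if w x = l then P x l else 0 := by
    funext x; simp
  rw [h]
  exact Finset.measurable_sum _ fun l _ =>
    Measurable.ite (hw (measurableSet_singleton l)) (hP l) measurable_const

theorem confes_intermediate_caseI
    {X : Type*} [MeasurableSpace X] {k : ℕ} (hk : 2 ≤ k)
    (P : X → Fin k → ℝ)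
    (hP_nonneg : ∀ x l, 0 ≤ P x l) (hP_sum : ∀ x, ∑ l, P x l = 1)
    (τ : Fin k → Fin k → ℝ)
    (hτ_nonneg : ∀ l j, 0 ≤ τ l j) (hτ_sum : ∀ l, ∑ j, τ l j = 1)
    (hτ_diag : ∀ j, 0 < τ j j)
    (v w y' : X → Fin k)
    (hv : ∀ x l, P x l ≤ P x (v x))
    (hw_ne : ∀ x, w x ≠ v x)
    (hw : ∀ x l, l ≠ v x → P x l ≤ P x (w x))
    (f : X → Fin k → ℝ)
    (hf_nonneg : ∀ x l, 0 ≤ f x l) (hf_sum : ∀ x, ∑ l, f x l = 1)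
    (hy' : ∀ x l, f x l ≤ f x (y' x))
    (ε : ℝ) (hε : 0 < ε)
    (happrox : ∀ x l, |f x l - ∑ i, τ i l * P x i| ≤ ε)
    (hP_meas : ∀ l, Measurable fun x => P x l)
    (hf_meas : ∀ l, Measurable fun x => f x l)
    (hv_meas : Measurable v) (hw_meas : Measurable w) (hy'_meas : Measurable y')
    (μX : Measure X) [IsProbabilityMeasure μX]
    (ν : Measure (X × Fin k)) [IsProbabilityMeasure ν]
    (hmarg : ν.map Prod.fst = μX)
    (α : ℝ)
    (hα : ∀ x, ∀ j : Fin k, α ≤ -f x j + τ (y' x) (y' x) * P x (w x)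
        + ∑ l ∈ Finset.univ.erase (y' x), τ l (y' x) * P x l) :
    ν {p : X × Fin k | p.2 ≠ v p.1 ∧ f p.1 (y' p.1) - f p.1 p.2 ≤ α}
      ≤ μX {x | P x (w x) ≤ P x (y' x) ∧ P x (y' x) ≤ P x (w x) + ε / ⨅ l, τ l l}
        + ν {p : X × Fin k | p.2 ≠ v p.1 ∧ v p.1 ≠ y' p.1} := by
  haveI : Nonempty (Fin k) := Fin.pos_iff_nonempty.mp (by omega)
  set B := {x | P x (w x) ≤ P x (y' x) ∧ P x (y' x) ≤ P x (w x) + ε / ⨅ l, τ l l} with hB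
  have hcpos : 0 < ⨅ l, τ l l := by
    obtain ⟨m, hm⟩ := Finite.exists_min (fun l => τ l l)
    have : (⨅ l, τ l l) = τ m m := le_antisymm
      (ciInf_le (Finite.bddBelow_range _) m) (le_ciInf hm)
    rw [this]; exact hτ_diag m
  -- subset lemma
  have hsub : {p : X × Fin k | p.2 ≠ v p.1 ∧ f p.1 (y' p.1) - f p.1 p.2 ≤ α}
      ⊆ (Prod.fst ⁻¹' B) ∪ {p : X × Fin k | p.2 ≠ v p.1 ∧ v p.1 ≠ y' p.1} := by
    rintro ⟨x, j⟩ ⟨hj, hEC⟩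
    by_cases hvy : v x = y' x
    · left
      have h1 : P x (w x) ≤ P x (y' x) := hvy ▸ hv x (w x)
      refine ⟨h1, ?_⟩
      -- main estimate
      have hA := hα x j
      have hf1 : f x (y' x) ≤ τ (y' x) (y' x) * P x (w x)
          + ∑ l ∈ Finset.univ.erase (y' x), τ l (y' x) * P x l := by
        have := le_trans hEC hA; linarith
      have hf2 : (∑ i, τ i (y' x) * P x i) - ε ≤ f x (y' x) := by
        have := abs_le.mp (happrox x (y' x)); linarith
      have hsplit : (∑ i, τ i (y' x) * P x i)
          = τ (y' x) (y' x) * P x (y' x)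
            + ∑ l ∈ Finset.univ.erase (y' x), τ l (y' x) * P x l := by
        rw [← Finset.add_sum_erase _ _ (Finset.mem_univ (y' x))]
      have hkey : τ (y' x) (y' x) * (P x (y' x) - P x (w x)) ≤ ε := by
        rw [hsplit] at hf2; ring_nf; nlinarith
      have hd : P x (y' x) - P x (w x) ≤ ε / τ (y' x) (y' x) :=
        (le_div_iff₀ (hτ_diag (y' x))).mpr (by linarith [hkey])
      have hle : (⨅ l, τ l l) ≤ τ (y' x) (y' x) :=
        ciInf_le (Finite.bddBelow_range _) (y' x)
      have : ε / τ (y' x) (y' x) ≤ ε / ⨅ l, τ l l :=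
        div_le_div_of_nonneg_left hε.le hcpos hle
      linarith
    · right; exact ⟨hj, hvy⟩
  have hBmeas : MeasurableSet B := by
    have h1 := meas_comp' P hP_meas w hw_meas
    have h2 := meas_comp' P hP_meas y' hy'_meas
    exact (measurableSet_le h1 h2).inter
      (measurableSet_le h2 (h1.add_const _))
  calc ν {p : X × Fin k | p.2 ≠ v p.1 ∧ f p.1 (y' p.1) - f p.1 p.2 ≤ α}
      ≤ ν ((Prod.fst ⁻¹' B) ∪ {p : X × Fin k | p.2 ≠ v p.1 ∧ v p.1 ≠ y' p.1}) :=
        measure_mono hsub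
    _ ≤ ν (Prod.fst ⁻¹' B) + ν {p : X × Fin k | p.2 ≠ v p.1 ∧ v p.1 ≠ y' p.1} :=
        measure_union_le _ _
    _ = μX B + ν {p : X × Fin k | p.2 ≠ v p.1 ∧ v p.1 ≠ y' p.1} := by
        rw [← hmarg, Measure.map_apply measurable_fst hBmeas]
end

section
/- (Intermediate measure bound for Case II, Equation (19).) Assume the setup below, and suppose the threshold α satisfies α ≥ 0 and, for every x ∈ X and every label j ∈ Fin k, α ≥ σ_{y'(x)}(x) − τ_{jj} · P_{w(x)}(x) − ∑_{l ≠ j} τ_{lj} · P_l(x). Then ν{(x, j) : j = v(x) and E_C(x, j) > α} ≤ μ_X{x : P_{v(x)}(x) ≤ P_{w(x)}(x) + ε / min_l τ_{ll}}. -/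
open MeasureTheory Finset

theorem confes_intermediate_caseII
    {X : Type*} [MeasurableSpace X] {k : ℕ} (hk : 2 ≤ k)
    (P : X → Fin k → ℝ)
    (hP_nonneg : ∀ x l, 0 ≤ P x l) (hP_sum : ∀ x, ∑ l, P x l = 1)
    (τ : Fin k → Fin k → ℝ)
    (hτ_nonneg : ∀ l j, 0 ≤ τ l j) (hτ_sum : ∀ l, ∑ j, τ l j = 1)
    (hτ_diag : ∀ j, 0 < τ j j)
    (v w y' : X → Fin k)
    (hv : ∀ x l, P x l ≤ P x (v x))
    (hw_ne : ∀ x, w x ≠ v x)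
    (hw : ∀ x l, l ≠ v x → P x l ≤ P x (w x))
    (f : X → Fin k → ℝ)
    (hf_nonneg : ∀ x l, 0 ≤ f x l) (hf_sum : ∀ x, ∑ l, f x l = 1)
    (hy' : ∀ x l, f x l ≤ f x (y' x))
    (ε : ℝ) (hε : 0 < ε)
    (happrox : ∀ x l, |f x l - ∑ i, τ i l * P x i| ≤ ε)
    (hP_meas : ∀ l, Measurable fun x => P x l)
    (hf_meas : ∀ l, Measurable fun x => f x l)
    (hv_meas : Measurable v) (hw_meas : Measurable w) (hy'_meas : Measurable y')
    (μX : Measure X) [IsProbabilityMeasure μX]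
    (ν : Measure (X × Fin k)) [IsProbabilityMeasure ν]
    (hmarg : ν.map Prod.fst = μX)
    (α : ℝ) (hα0 : 0 ≤ α)
    (hα : ∀ x, ∀ j : Fin k, f x (y' x) - τ j j * P x (w x)
        - ∑ l ∈ Finset.univ.erase j, τ l j * P x l ≤ α) :
    ν {p : X × Fin k | p.2 = v p.1 ∧ α < f p.1 (y' p.1) - f p.1 p.2}
      ≤ μX {x | P x (v x) ≤ P x (w x) + ε / ⨅ l, τ l l} := by
  have hne : Nonempty (Fin k) := ⟨⟨0, by omega⟩⟩
  set c : ℝ := ⨅ l, τ l l with hc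
  have hbdd : BddBelow (Set.range fun l => τ l l) := (Set.finite_range _).bddBelow
  have hcle : ∀ l, c ≤ τ l l := fun l => ciInf_le hbdd l
  have hcpos : 0 < c := by
    obtain ⟨l, hl⟩ := Finite.exists_min (fun l : Fin k => τ l l)
    have : c = τ l l := le_antisymm (hcle l) (le_ciInf hl)
    rw [this]; exact hτ_diag l
  set S : Set X := {x | P x (v x) ≤ P x (w x) + ε / c} with hS
  -- measurability of S
  have hmv : Measurable fun x => P x (v x) := by
    have : (fun x => P x (v x)) = fun x => ∑ l, if v x = l then P x l else 0 := by
      funext x; simp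
    rw [this]
    exact Finset.measurable_sum _ fun l _ =>
      Measurable.ite (hv_meas (MeasurableSet.singleton l)) (hP_meas l) measurable_const
  have hmw : Measurable fun x => P x (w x) := by
    have : (fun x => P x (w x)) = fun x => ∑ l, if w x = l then P x l else 0 := by
      funext x; simp
    rw [this]
    exact Finset.measurable_sum _ fun l _ =>
      Measurable.ite (hw_meas (MeasurableSet.singleton l)) (hP_meas l) measurable_const
  have hSm : MeasurableSet S :=
    measurableSet_le hmv (hmw.add_const _)
  -- the key pointwise inclusion
  have hsub : {p : X × Fin k | p.2 = v p.1 ∧ α < f p.1 (y' p.1) - f p.1 p.2}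
      ⊆ Prod.fst ⁻¹' S := by
    rintro ⟨x, j⟩ ⟨hj, hgt⟩
    simp only [Set.mem_preimage]
    simp only [] at hj hgt
    subst hj
    have h1 := hα x (v x)
    have h2 : f x (v x) < τ (v x) (v x) * P x (w x)
        + ∑ l ∈ Finset.univ.erase (v x), τ l (v x) * P x l := by
      have := lt_of_le_of_lt h1 hgt
      linarith
    have h3 : ∑ i, τ i (v x) * P x i - ε ≤ f x (v x) := by
      have := happrox x (v x)
      rw [abs_le] at this
      linarith [this.1]
    have h4 : ∑ i, τ i (v x) * P x i
        = τ (v x) (v x) * P x (v x) + ∑ l ∈ Finset.univ.erase (v x), τ l (v x) * P x l := by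
      rw [← Finset.add_sum_erase _ _ (Finset.mem_univ (v x))]
    have h5 : τ (v x) (v x) * P x (v x) < τ (v x) (v x) * P x (w x) + ε := by
      rw [h4] at h3; linarith
    have h6 : P x (v x) < P x (w x) + ε / τ (v x) (v x) := by
      have hd := hτ_diag (v x)
      rw [← sub_lt_iff_lt_add', lt_div_iff₀ hd]
      nlinarith
    have h7 : ε / τ (v x) (v x) ≤ ε / c :=
      div_le_div_of_nonneg_left hε.le hcpos (hcle (v x))
    show P x (v x) ≤ P x (w x) + ε / c
    linarith
  calc ν {p : X × Fin k | p.2 = v p.1 ∧ α < f p.1 (y' p.1) - f p.1 p.2}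
      ≤ ν (Prod.fst ⁻¹' S) := measure_mono hsub
    _ = μX S := by rw [← hmarg, Measure.map_apply measurable_fst hSm]
end

section
/- (Intermediate measure bound for Lemma 1.) Assume the setup below, and suppose the threshold α ∈ ℝ satisfies, for every x ∈ X and every label j ∈ Fin k, α ≤ τ_{jj} · P_{w(x)}(x) + ∑_{l ≠ j} τ_{lj} · P_l(x). Then ν{(x, j) : j = v(x) and σ_j(x) < α} ≤ μ_X{x : P_{v(x)}(x) ≤ P_{w(x)}(x) + ε / min_l τ_{ll}}. -/
open MeasureTheory Finset

theorem confes_intermediate_lemma1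
    {X : Type*} [MeasurableSpace X] {k : ℕ} (hk : 2 ≤ k)
    (P : X → Fin k → ℝ)
    (hP_nonneg : ∀ x l, 0 ≤ P x l) (hP_sum : ∀ x, ∑ l, P x l = 1)
    (τ : Fin k → Fin k → ℝ)
    (hτ_nonneg : ∀ l j, 0 ≤ τ l j) (hτ_sum : ∀ l, ∑ j, τ l j = 1)
    (hτ_diag : ∀ j, 0 < τ j j)
    (v w y' : X → Fin k)
    (hv : ∀ x l, P x l ≤ P x (v x))
    (hw_ne : ∀ x, w x ≠ v x)
    (hw : ∀ x l, l ≠ v x → P x l ≤ P x (w x))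
    (f : X → Fin k → ℝ)
    (hf_nonneg : ∀ x l, 0 ≤ f x l) (hf_sum : ∀ x, ∑ l, f x l = 1)
    (hy' : ∀ x l, f x l ≤ f x (y' x))
    (ε : ℝ) (hε : 0 < ε)
    (happrox : ∀ x l, |f x l - ∑ i, τ i l * P x i| ≤ ε)
    (hP_meas : ∀ l, Measurable fun x => P x l)
    (hf_meas : ∀ l, Measurable fun x => f x l)
    (hv_meas : Measurable v) (hw_meas : Measurable w) (hy'_meas : Measurable y')
    (μX : Measure X) [IsProbabilityMeasure μX]
    (ν : Measure (X × Fin k)) [IsProbabilityMeasure ν]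
    (hmarg : ν.map Prod.fst = μX)
    (α : ℝ)
    (hα : ∀ x, ∀ j : Fin k, α ≤ τ j j * P x (w x)
        + ∑ l ∈ Finset.univ.erase j, τ l j * P x l) :
    ν {p : X × Fin k | p.2 = v p.1 ∧ f p.1 p.2 < α}
      ≤ μX {x | P x (v x) ≤ P x (w x) + ε / ⨅ l, τ l l} := by

  have hk0 : 0 < k := by omega
  haveI : Nonempty (Fin k) := ⟨⟨0, hk0⟩⟩
  set c : ℝ := ⨅ l, τ l l with hc
  have hbdd : BddBelow (Set.range fun l => τ l l) :=
    Set.Finite.bddBelow (Set.finite_range _)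
  obtain ⟨j0, hj0⟩ := Finite.exists_min fun l : Fin k => τ l l
  have hc_eq : c = τ j0 j0 := le_antisymm (ciInf_le hbdd j0) (le_ciInf hj0)
  have hc_pos : 0 < c := hc_eq ▸ hτ_diag j0
  have hc_le : ∀ j, c ≤ τ j j := fun j => ciInf_le hbdd j
  have hsub : {p : X × Fin k | p.2 = v p.1 ∧ f p.1 p.2 < α} ⊆
      Prod.fst ⁻¹' {x | P x (v x) ≤ P x (w x) + ε / c} := by
    rintro ⟨x, j⟩ ⟨hj, hfa⟩
    simp only [Set.mem_preimage, Set.mem_setOf_eq]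
    simp only at hj hfa
    subst hj
    have h1 : ∑ i, τ i (v x) * P x i - ε ≤ f x (v x) := by
      have := abs_le.mp (happrox x (v x)); linarith [this.1, this.2]
    have h2 := hα x (v x)
    have hsplit : ∑ i, τ i (v x) * P x i
        = τ (v x) (v x) * P x (v x) + ∑ l ∈ Finset.univ.erase (v x), τ l (v x) * P x l := by
      rw [← Finset.add_sum_erase _ _ (Finset.mem_univ (v x))]
    have hτv := hτ_diag (v x)
    have h3 : τ (v x) (v x) * P x (v x) < τ (v x) (v x) * P x (w x) + ε := by
      linarith
    have h4 : P x (v x) ≤ P x (w x) + ε / τ (v x) (v x) := by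
      have h5 : P x (v x) - P x (w x) < ε / τ (v x) (v x) := by
        rw [lt_div_iff₀ hτv]; nlinarith
      linarith
    have h6 : ε / τ (v x) (v x) ≤ ε / c := by
      gcongr
      exact hc_le _
    linarith
  have hPv : Measurable fun x => P x (v x) := by
    have : (fun x => P x (v x)) = fun x => ∑ l, if v x = l then P x l else 0 := by
      funext x; rw [Finset.sum_eq_single (v x), if_pos rfl]
      · exact fun b _ hb => if_neg fun h => hb h.symm
      · exact fun h => absurd (Finset.mem_univ _) h
    rw [this]
    exact Finset.measurable_sum _ fun l _ =>
      Measurable.ite (hv_meas (measurableSet_singleton l)) (hP_meas l) measurable_const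
  have hPw : Measurable fun x => P x (w x) := by
    have : (fun x => P x (w x)) = fun x => ∑ l, if w x = l then P x l else 0 := by
      funext x; rw [Finset.sum_eq_single (w x), if_pos rfl]
      · exact fun b _ hb => if_neg fun h => hb h.symm
      · exact fun h => absurd (Finset.mem_univ _) h
    rw [this]
    exact Finset.measurable_sum _ fun l _ =>
      Measurable.ite (hw_meas (measurableSet_singleton l)) (hP_meas l) measurable_const
  have hmeasA : MeasurableSet {x | P x (v x) ≤ P x (w x) + ε / c} :=
    measurableSet_le hPv (hPw.add_const _)
  calc ν {p : X × Fin k | p.2 = v p.1 ∧ f p.1 p.2 < α}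
      ≤ ν (Prod.fst ⁻¹' {x | P x (v x) ≤ P x (w x) + ε / c}) := measure_mono hsub
    _ = μX {x | P x (v x) ≤ P x (w x) + ε / c} := by
        rw [← hmarg]; exact (Measure.map_apply measurable_fst hmeasA).symm
end
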